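/- arXiv:1401.6907 — 6 statements merged into one kernel-verified Lean document; each statement's English description precedes it below -/
import Mathlib

section
/- Let ⫝ be a pre-independence relation on a set M, A ⊆ M, and (a_i)_{i∈I} an independent sequence over A indexed by a linear order (I,<). Then for any two finite subsets S, T of {a_i : i ∈ I} with S ∩ T = ∅, we have S ⫝_A T. -/
/-- A pre-independence relation on a set `M`. `ind A C B` means `A ⫝_C B`
(`A` is independent from `B` over `C`). -/
structure PreIndep (M : Type*) where
  ind : Set M → Set M → Set M → Prop
  existence : ∀ A B : Set M, ind A A B
  monotonicity : ∀ A B C D : Set M, ind A C B → D ⊆ A → ind D C B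
  baseMonotonicity : ∀ A B C D : Set M, D ⊆ C → C ⊆ B → ind A D B → ind A C B
  symmetry : ∀ A B C : Set M, ind A C B → ind B C A
  transitivity : ∀ A B C D : Set M, D ⊆ C → C ⊆ B → ind B C A → ind C D A → ind B D A
  normality : ∀ A B C : Set M, ind A C B → ind (A ∪ C) C B
  finiteCharacter : ∀ A B C : Set M, (∀ A₀ : Set M, A₀ ⊆ A → A₀.Finite → ind A₀ C B) → ind A C B
  antiReflexivity : ∀ A B : Set M, ind A B A → ∀ C : Set M, ind A B C

/-- Key step: attach one new element `b` to the right-hand side. -/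
lemma PreIndep.key {M : Type*} (P : PreIndep M) (A X T' : Set M) (b : M)
    (h1 : P.ind X A T') (h2 : P.ind (X ∪ T' ∪ A) A {b}) :
    P.ind X A (T' ∪ {b}) := by
  have h2' : P.ind {b} A (X ∪ T' ∪ A) := P.symmetry _ _ _ h2
  have hbm : P.ind {b} (T' ∪ A) (X ∪ T' ∪ A) :=
    P.baseMonotonicity _ _ _ _ (Set.subset_union_right)
      (by intro x hx; rcases hx with h | h
          · exact Or.inl (Or.inr h)
          · exact Or.inr h) h2'
  have h3 : P.ind X (T' ∪ A) {b} :=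
    P.monotonicity _ _ _ _ (P.symmetry _ _ _ hbm) (by intro x hx; exact Or.inl (Or.inl hx))
  have h4 : P.ind ({b} ∪ (T' ∪ A)) (T' ∪ A) X := P.normality _ _ _ (P.symmetry _ _ _ h3)
  have h5 : P.ind (T' ∪ A) A X := P.normality _ _ _ (P.symmetry _ _ _ h1)
  have h6 : P.ind ({b} ∪ (T' ∪ A)) A X :=
    P.transitivity _ _ _ _ (Set.subset_union_right) (Set.subset_union_right) h4 h5
  have h7 : P.ind (T' ∪ {b}) A X :=
    P.monotonicity _ _ _ _ h6 (by
      intro x hx; rcases hx with h | h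
      · exact Or.inr (Or.inl h)
      · exact Or.inl h)
  exact P.symmetry _ _ _ h7

lemma PreIndep.empty_right {M : Type*} (P : PreIndep M) (A X : Set M) :
    P.ind X A ∅ :=
  P.symmetry _ _ _ (P.monotonicity _ _ _ _ (P.existence A X) (Set.empty_subset A))

lemma PreIndep.finset_indep {M : Type*} (P : PreIndep M)
    {ι : Type*} [LinearOrder ι] (A : Set M) (a : ι → M)
    (hinj : Function.Injective a)
    (hind : ∀ j : ι, P.ind (a '' {i | i < j}) A {a j}) :
    ∀ n (s t : Finset ι), (s ∪ t).card = n → Disjoint s t →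
      P.ind (a '' ↑s) A (a '' ↑t) := by
  intro n
  induction n using Nat.strong_induction_on with
  | _ n IH =>
    intro s t hcard hdisj
    rcases t.eq_empty_or_nonempty with rfl | htne
    · simpa using P.empty_right A (a '' ↑s)
    have hne : (s ∪ t).Nonempty := Finset.Nonempty.mono (Finset.subset_union_right) htne
    set j := (s ∪ t).max' hne with hj
    have hjmem : j ∈ s ∪ t := (s ∪ t).max'_mem hne
    have hlt : ∀ i ∈ s ∪ t, i ≠ j → i < j := fun i hi hne' =>
      lt_of_le_of_ne ((s ∪ t).le_max' i hi) hne'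
    -- helper producing the `h2` hypothesis of `key`
    have h2gen : ∀ (X : Set M), X ⊆ a '' {i | i < j} → P.ind (X ∪ A) A {a j} := by
      intro X hX
      have := P.normality _ _ _ (hind j)
      exact P.monotonicity _ _ _ _ this (Set.union_subset_union_left A hX)
    by_cases hjt : j ∈ t
    · have hjs : j ∉ s := fun h => (Finset.disjoint_left.mp hdisj h) hjt
      have hcard' : (s ∪ t.erase j).card < n := by
        have : s ∪ t.erase j = (s ∪ t).erase j := by
          ext x; simp only [Finset.mem_union, Finset.mem_erase]
          constructor
          · rintro (h | ⟨h1, h2⟩)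
            · exact ⟨fun hx => hjs (hx ▸ h), Or.inl h⟩
            · exact ⟨h1, Or.inr h2⟩
          · rintro ⟨h1, h2 | h2⟩
            · exact Or.inl h2
            · exact Or.inr ⟨h1, h2⟩
        rw [this, ← hcard]
        exact Finset.card_erase_lt_of_mem hjmem
      have h1 := IH _ hcard' s (t.erase j) rfl (hdisj.mono_right (Finset.erase_subset _ _))
      have hsub : (a '' ↑s ∪ a '' ↑(t.erase j)) ⊆ a '' {i | i < j} := by
        rw [← Set.image_union]
        apply Set.image_mono
        rintro i (hi | hi)
        · exact hlt i (Finset.mem_union_left _ hi) (fun h => hjs (h ▸ hi))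
        · have := Finset.mem_erase.mp hi
          exact hlt i (Finset.mem_union_right _ this.2) this.1
      have h2 := h2gen _ hsub
      have hres := P.key A (a '' ↑s) (a '' ↑(t.erase j)) (a j) h1 h2
      have : (a '' ↑(t.erase j)) ∪ {a j} = a '' ↑t := by
        have hidx : (↑(t.erase j) ∪ {j} : Set ι) = ↑t := by
          ext x
          simp only [Set.mem_union, Finset.coe_erase, Set.mem_diff, Set.mem_singleton_iff,
            Finset.mem_coe]
          constructor
          · rintro (⟨h, _⟩ | rfl)
            · exact h
            · exact hjt
          · intro hx; by_cases hxj : x = j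
            · exact Or.inr hxj
            · exact Or.inl ⟨hx, hxj⟩
        rw [← Set.image_singleton, ← Set.image_union, hidx]
      rwa [this] at hres
    · have hjs : j ∈ s := by
        rcases Finset.mem_union.mp hjmem with h | h
        · exact h
        · exact absurd h hjt
      have hcard' : (t ∪ s.erase j).card < n := by
        have : t ∪ s.erase j = (s ∪ t).erase j := by
          ext x; simp only [Finset.mem_union, Finset.mem_erase]
          constructor
          · rintro (h | ⟨h1, h2⟩)
            · exact ⟨fun hx => hjt (hx ▸ h), Or.inr h⟩
            · exact ⟨h1, Or.inl h2⟩
          · rintro ⟨h1, h2 | h2⟩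
            · exact Or.inr ⟨h1, h2⟩
            · exact Or.inl h2
        rw [this, ← hcard]
        exact Finset.card_erase_lt_of_mem hjmem
      have h1 := IH _ hcard' t (s.erase j) rfl
        (hdisj.symm.mono_right (Finset.erase_subset _ _))
      have hsub : (a '' ↑t ∪ a '' ↑(s.erase j)) ⊆ a '' {i | i < j} := by
        rw [← Set.image_union]
        apply Set.image_mono
        rintro i (hi | hi)
        · exact hlt i (Finset.mem_union_right _ hi) (fun h => hjt (h ▸ hi))
        · have := Finset.mem_erase.mp hi
          exact hlt i (Finset.mem_union_left _ this.2) this.1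
      have h2 := h2gen _ hsub
      have hres := P.key A (a '' ↑t) (a '' ↑(s.erase j)) (a j) h1 h2
      have heq : (a '' ↑(s.erase j)) ∪ {a j} = a '' ↑s := by
        have hidx : (↑(s.erase j) ∪ {j} : Set ι) = ↑s := by
          ext x
          simp only [Set.mem_union, Finset.coe_erase, Set.mem_diff, Set.mem_singleton_iff,
            Finset.mem_coe]
          constructor
          · rintro (⟨h, _⟩ | rfl)
            · exact h
            · exact hjs
          · intro hx; by_cases hxj : x = j
            · exact Or.inr hxj
            · exact Or.inl ⟨hx, hxj⟩
        rw [← Set.image_singleton, ← Set.image_union, hidx]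
      rw [heq] at hres
      exact P.symmetry _ _ _ hres

/-- Any two disjoint finite subsets of an independent sequence over `A`
are independent over `A`. -/
theorem indep_sequence_finite_disjoint {M : Type*} (P : PreIndep M)
    {ι : Type*} [LinearOrder ι] (A : Set M) (a : ι → M)
    (hinj : Function.Injective a)
    (hind : ∀ j : ι, P.ind (a '' {i | i < j}) A {a j})
    (S T : Set M) (hS : S ⊆ Set.range a) (hT : T ⊆ Set.range a)
    (hSfin : S.Finite) (hTfin : T.Finite) (hST : S ∩ T = ∅) :
    P.ind S A T := by
  have hsf : (a ⁻¹' S).Finite := hSfin.preimage hinj.injOn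
  have htf : (a ⁻¹' T).Finite := hTfin.preimage hinj.injOn
  have hSim : a '' ↑hsf.toFinset = S := by
    rw [Set.Finite.coe_toFinset]; exact Set.image_preimage_eq_of_subset hS
  have hTim : a '' ↑htf.toFinset = T := by
    rw [Set.Finite.coe_toFinset]; exact Set.image_preimage_eq_of_subset hT
  have hdisj : Disjoint hsf.toFinset htf.toFinset := by
    rw [Finset.disjoint_left]
    intro i hi hi'
    rw [Set.Finite.mem_toFinset] at hi hi'
    have : a i ∈ S ∩ T := ⟨hi, hi'⟩
    rw [hST] at this
    exact this
  have := P.finset_indep A a hinj hind _ hsf.toFinset htf.toFinset rfl hdisj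
  rwa [hSim, hTim] at this
end

section
/- Let ⫝ be a pre-independence relation on a set M, A ⊆ M, and (a_i)_{i∈I} an independent sequence over A indexed by a linear order (I,<). Then for every subset S of {a_i : i ∈ I}, we have S ⫝_A ({a_i : i ∈ I} \ S). -/
lemma PreIndep.empty_left {M : Type*} (P : PreIndep M) (C B : Set M) :
    P.ind ∅ C B :=
  P.monotonicity C B C ∅ (P.existence C B) (Set.empty_subset C)

lemma PreIndep.mix {M : Type*} (P : PreIndep M) (A X Q z : Set M)
    (h1 : P.ind X A Q) (h2 : P.ind (X ∪ Q) A z) : P.ind X A (Q ∪ z) := by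
  have s1 : P.ind z A (X ∪ Q) := P.symmetry _ _ _ h2
  have s2 : P.ind (z ∪ A) A (X ∪ Q) := P.normality _ _ _ s1
  have s3 : P.ind (X ∪ Q) A (z ∪ A) := P.symmetry _ _ _ s2
  have s4 : P.ind (X ∪ Q ∪ A) A (z ∪ A) := P.normality _ _ _ s3
  have s5 : P.ind (z ∪ A) A (X ∪ Q ∪ A) := P.symmetry _ _ _ s4
  have s6 : P.ind (z ∪ A) (Q ∪ A) (X ∪ Q ∪ A) := by
    apply P.baseMonotonicity _ _ _ A Set.subset_union_right ?_ s5
    intro x hx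
    rcases hx with hx | hx
    · exact Or.inl (Or.inr hx)
    · exact Or.inr hx
  have s7 : P.ind ((z ∪ A) ∪ (Q ∪ A)) (Q ∪ A) (X ∪ Q ∪ A) := P.normality _ _ _ s6
  have s8 : P.ind (X ∪ Q ∪ A) (Q ∪ A) ((z ∪ A) ∪ (Q ∪ A)) := P.symmetry _ _ _ s7
  have s9 : P.ind X (Q ∪ A) ((z ∪ A) ∪ (Q ∪ A)) :=
    P.monotonicity _ _ _ _ s8 (Set.subset_union_left.trans Set.subset_union_left)
  have s10 : P.ind ((z ∪ A) ∪ (Q ∪ A)) (Q ∪ A) X := P.symmetry _ _ _ s9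
  have s11 : P.ind (Q ∪ A) A X := P.normality _ _ _ (P.symmetry _ _ _ h1)
  have s13 : P.ind ((z ∪ A) ∪ (Q ∪ A)) A X :=
    P.transitivity X _ _ A Set.subset_union_right Set.subset_union_right s10 s11
  have s14 : P.ind (Q ∪ z) A X := by
    apply P.monotonicity _ _ _ _ s13
    intro x hx; rcases hx with hx | hx
    · exact Or.inr (Or.inl hx)
    · exact Or.inl (Or.inl hx)
  exact P.symmetry _ _ _ s14

lemma PreIndep.key_s3 {M : Type*} (P : PreIndep M)
    {ι : Type*} [LinearOrder ι] (A : Set M) (a : ι → M)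
    (hind : ∀ j : ι, P.ind (a '' {i | i < j}) A {a j}) :
    ∀ (n : ℕ) (F G : Finset ι), (F ∪ G).card ≤ n → Disjoint F G →
      P.ind (a '' ↑F) A (a '' ↑G) := by
  intro n
  induction n with
  | zero =>
    intro F G hc _
    have : F = ∅ := by
      have := Finset.card_eq_zero.mp (Nat.le_zero.mp hc)
      exact Finset.union_eq_empty.mp this |>.1
    simp [this, P.empty_left]
  | succ n ih =>
    intro F G hc hdisj
    rcases eq_or_ne (F ∪ G) ∅ with hE | hNE
    · have : F = ∅ := (Finset.union_eq_empty.mp hE).1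
      simp [this, P.empty_left]
    · have hne : (F ∪ G).Nonempty := Finset.nonempty_iff_ne_empty.mpr hNE
      set m := (F ∪ G).max' hne with hm
      have hmem : m ∈ F ∪ G := (F ∪ G).max'_mem hne
      have hlt : ∀ i ∈ F ∪ G, i ≠ m → i < m := by
        intro i hi hne'
        exact lt_of_le_of_ne ((F ∪ G).le_max' i hi) hne'
      have hsub : ∀ T : Set ι, T ⊆ (↑(F ∪ G) : Set ι) → m ∉ T →
          a '' T ⊆ a '' {i | i < m} := by
        intro T hT hmT
        apply Set.image_mono
        intro i hi
        exact hlt i (hT hi) (fun h => hmT (h ▸ hi))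
      rcases Finset.mem_union.mp hmem with hmF | hmG
      · -- m ∈ F
        have hmG : m ∉ G := Finset.disjoint_left.mp hdisj hmF
        set F' := F.erase m with hF'
        have hcard : (F' ∪ G).card ≤ n := by
          have h1 : F' ∪ G = (F ∪ G).erase m := by
            rw [Finset.erase_union_distrib, Finset.erase_eq_of_notMem hmG]
          rw [h1]
          have := Finset.card_erase_of_mem hmem
          omega
        have hdisj' : Disjoint F' G := hdisj.mono_left (Finset.erase_subset _ _)
        have hIH := ih F' G hcard hdisj'
        have h2 : P.ind (a '' ↑G ∪ a '' ↑F') A {a m} := by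
          apply P.monotonicity _ _ _ _ (hind m)
          rw [← Set.image_union]
          apply hsub (↑G ∪ ↑F')
          · intro i hi
            rcases hi with hi | hi
            · exact Finset.mem_coe.mpr (Finset.mem_union_right _ hi)
            · exact Finset.mem_coe.mpr (Finset.mem_union_left _ (Finset.mem_of_mem_erase hi))
          · simp [hF', hmG]
        have := P.mix A (a '' ↑G) (a '' ↑F') {a m} (P.symmetry _ _ _ hIH) h2
        have hFeq : a '' ↑F = a '' ↑F' ∪ {a m} := by
          have : (↑F : Set ι) = ↑F' ∪ {m} := by
            ext x
            simp only [hF', Finset.coe_erase, Set.mem_union, Set.mem_diff,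
              Set.mem_singleton_iff, Finset.mem_coe]
            constructor
            · intro hx
              by_cases h : x = m
              · exact Or.inr h
              · exact Or.inl ⟨hx, h⟩
            · rintro (⟨hx, _⟩ | rfl)
              · exact hx
              · exact hmF
          rw [this, Set.image_union]
          simp
        rw [hFeq]
        exact P.symmetry _ _ _ this
      · -- m ∈ G
        have hmF : m ∉ F := Finset.disjoint_right.mp hdisj hmG
        set G' := G.erase m with hG'
        have hcard : (F ∪ G').card ≤ n := by
          have h1 : F ∪ G' = (F ∪ G).erase m := by
            rw [Finset.erase_union_distrib, Finset.erase_eq_of_notMem hmF]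
          rw [h1]
          have := Finset.card_erase_of_mem hmem
          omega
        have hdisj' : Disjoint F G' := hdisj.mono_right (Finset.erase_subset _ _)
        have hIH := ih F G' hcard hdisj'
        have h2 : P.ind (a '' ↑F ∪ a '' ↑G') A {a m} := by
          apply P.monotonicity _ _ _ _ (hind m)
          rw [← Set.image_union]
          apply hsub (↑F ∪ ↑G')
          · intro i hi
            rcases hi with hi | hi
            · exact Finset.mem_coe.mpr (Finset.mem_union_left _ hi)
            · exact Finset.mem_coe.mpr (Finset.mem_union_right _ (Finset.mem_of_mem_erase hi))
          · simp [hG', hmF]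
        have := P.mix A (a '' ↑F) (a '' ↑G') {a m} hIH h2
        have hGeq : a '' ↑G = a '' ↑G' ∪ {a m} := by
          have : (↑G : Set ι) = ↑G' ∪ {m} := by
            ext x
            simp only [hG', Finset.coe_erase, Set.mem_union, Set.mem_diff,
              Set.mem_singleton_iff, Finset.mem_coe]
            constructor
            · intro hx
              by_cases h : x = m
              · exact Or.inr h
              · exact Or.inl ⟨hx, h⟩
            · rintro (⟨hx, _⟩ | rfl)
              · exact hx
              · exact hmG
          rw [this, Set.image_union]
          simp
        rw [hGeq]
        exact this

/-- Any subset of an independent sequence over `A` is independent over `A`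
from the rest of the sequence. -/
theorem indep_sequence_subset_compl {M : Type*} (P : PreIndep M)
    {ι : Type*} [LinearOrder ι] (A : Set M) (a : ι → M)
    (hinj : Function.Injective a)
    (hind : ∀ j : ι, P.ind (a '' {i | i < j}) A {a j})
    (S : Set M) (hS : S ⊆ Set.range a) :
    P.ind S A (Set.range a \ S) := by
  apply P.finiteCharacter
  intro S₀ hS₀ hfinS
  apply P.symmetry
  apply P.finiteCharacter
  intro B₀ hB₀ hfinB
  apply P.symmetry
  have hS₀r : S₀ ⊆ Set.range a := hS₀.trans hS
  have hB₀r : B₀ ⊆ Set.range a := hB₀.trans Set.diff_subset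
  have hFfin : (a ⁻¹' S₀).Finite := hfinS.preimage (Set.injOn_of_injective hinj)
  have hGfin : (a ⁻¹' B₀).Finite := hfinB.preimage (Set.injOn_of_injective hinj)
  have hFeq : a '' (a ⁻¹' S₀) = S₀ := Set.image_preimage_eq_of_subset hS₀r
  have hGeq : a '' (a ⁻¹' B₀) = B₀ := Set.image_preimage_eq_of_subset hB₀r
  have hdisj : Disjoint hFfin.toFinset hGfin.toFinset := by
    rw [Finset.disjoint_left]
    intro i hiF hiG
    simp only [Set.Finite.mem_toFinset, Set.mem_preimage] at hiF hiG
    exact (hB₀ hiG).2 (hS₀ hiF)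
  have := P.key_s3 A a hind (hFfin.toFinset ∪ hGfin.toFinset).card
    hFfin.toFinset hGfin.toFinset le_rfl hdisj
  simpa [Set.Finite.coe_toFinset, hFeq, hGeq] using this
end

section
/- Let ⫝ be a pre-independence relation on a set M and let A, B, C, U ⊆ M. If B ⫝_C B and C ∪ A ⫝_B U, then A ⫝_C U. -/
/-- If `B ⫝_C B` and `C ∪ A ⫝_B U`, then `A ⫝_C U`. -/
theorem preIndep_base_change {M : Type*} (P : PreIndep M) (A B C U : Set M)
    (h1 : P.ind B C B) (h2 : P.ind (C ∪ A) B U) :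
    P.ind A C U := by
  -- Step 1: `A ⫝_{B∪C} U`.
  have n1 : P.ind ((C ∪ A) ∪ B) B U := P.normality _ _ _ h2
  have s1 : P.ind U B ((C ∪ A) ∪ B) := P.symmetry _ _ _ n1
  have bm : P.ind U (B ∪ C) ((C ∪ A) ∪ B) := by
    refine P.baseMonotonicity _ _ _ _ Set.subset_union_left ?_ s1
    intro x hx
    rcases hx with hx | hx
    · exact Or.inr hx
    · exact Or.inl (Or.inl hx)
  have hA : P.ind A (B ∪ C) U := by
    refine P.monotonicity _ _ _ _ (P.symmetry _ _ _ bm) ?_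
    intro x hx; exact Or.inl (Or.inr hx)
  -- Step 2: `B∪C ⫝_C U` from anti-reflexivity and normality.
  have hBC : P.ind (B ∪ C) C U := P.normality _ _ _ (P.antiReflexivity _ _ h1 U)
  -- Step 3: transitivity along C ⊆ B∪C ⊆ A∪(B∪C).
  have trans : P.ind (A ∪ (B ∪ C)) C U :=
    P.transitivity U _ _ _ Set.subset_union_right Set.subset_union_right
      (P.normality _ _ _ hA) hBC
  exact P.monotonicity _ _ _ _ trans Set.subset_union_left
end

section
/- Let F be a field, E a commutative ring that is an F-algebra, n ≥ 1, and a : Fin n → E a family that is algebraically independent over F. Then for every j < n, the element ∑_{i<n} a(i) is transcendental over the F-subalgebra generated by {a(i) : i < n, i ≠ j}. (Hence every finite algebraically independent family is a federated sequence for the algebraic-closure pregeometry.) -/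
/-- If `a : Fin n → E` (with `n ≥ 1`) is algebraically independent over a field `F`,
then for every `j`, the sum `∑ i, a i` is transcendental over the `F`-subalgebra
generated by the `a i` for `i ≠ j`: algebraically independent families are
federated sequences for the algebraic-closure pregeometry. -/
theorem sum_transcendental_of_algebraicIndependent
    {F E : Type*} [Field F] [CommRing E] [Algebra F E]
    (n : ℕ) (hn : 1 ≤ n) (a : Fin n → E) (ha : AlgebraicIndependent F a) :
    ∀ j : Fin n, Transcendental (Algebra.adjoin F (a '' {i | i ≠ j})) (∑ i, a i) := by
  intro j
  classical
  haveI : Nontrivial E := ha.algebraMap_injective.nontrivial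
  set R := Algebra.adjoin F (a '' {i | i ≠ j}) with hR
  have hx : AlgebraicIndependent F (fun i : {i : Fin n // i ≠ j} => a i) :=
    ha.comp _ Subtype.val_injective
  have key : Transcendental R (a j) := by
    have h2 : (fun o : Option {i : Fin n // i ≠ j} =>
        o.elim (a j) fun i : {i : Fin n // i ≠ j} => a i) =
        a ∘ (fun o : Option {i : Fin n // i ≠ j} => o.elim j Subtype.val) := by
      funext o; cases o <;> rfl
    have h3 : AlgebraicIndependent F (fun o : Option {i : Fin n // i ≠ j} =>
        o.elim (a j) fun i : {i : Fin n // i ≠ j} => a i) := by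
      rw [h2]
      refine ha.comp _ ?_
      rintro (_ | ⟨i, hi⟩) (_ | ⟨k, hk⟩) h <;>
        simp only [Option.elim] at h
      · rfl
      · exact absurd h.symm hk
      · exact absurd h hi
      · exact congrArg Option.some (Subtype.ext h)
    have := (hx.option_iff_transcendental (a j)).1 h3
    have hrange : Set.range (fun i : {i : Fin n // i ≠ j} => a i) = a '' {i | i ≠ j} := by
      rw [show (fun i : {i : Fin n // i ≠ j} => a i) = a ∘ Subtype.val from rfl,
        Set.range_comp, Subtype.range_val_subtype]
    rwa [hrange] at this
  have hs : (∑ i ∈ Finset.univ.erase j, a i) ∈ R :=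
    Subalgebra.sum_mem _ fun i hi => Algebra.subset_adjoin
      ⟨i, (Finset.mem_erase.1 hi).1, rfl⟩
  have hsum : ∑ i, a i =
      Polynomial.aeval (a j) (Polynomial.X + Polynomial.C (⟨_, hs⟩ : R)) := by
    rw [Polynomial.aeval_add, Polynomial.aeval_X, Polynomial.aeval_C,
      ← Finset.add_sum_erase _ a (Finset.mem_univ j)]
    rfl
  rw [hsum]
  exact key.aeval _ (by simp) (by rw [Polynomial.leadingCoeff_X_add_C]; exact one_mem _)
end

section
/- (Soundness of AIRAIndL(⫝)) Let ⫝ be a pre-independence relation on a set M and Σ a set of independence atoms. If Σ ⊢ x⃗ ⊥ y⃗ in the deductive system of atomic independence logic, then for every assignment s : Var → M such that s(v⃗) ⫝_∅ s(w⃗) for all atoms v⃗ ⊥ w⃗ ∈ Σ, we have s(x⃗) ⫝_∅ s(y⃗). -/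
/-- Variables of atomic independence logic: a countably infinite set. -/
abbrev Var := ℕ

/-- An independence atom `x⃗ ⊥ y⃗` is represented as the pair of finite
sequences of variables `(x⃗, y⃗)`. -/
abbrev IndAtom := List Var × List Var

/-- The deductive system of atomic independence logic: `Derives Γ x y` means
`Γ ⊢ x⃗ ⊥ y⃗`. -/
inductive Derives (Γ : Set IndAtom) : List Var → List Var → Prop
  /-- atoms of `Γ` may be used in deductions -/
  | hyp {x y : List Var} : (x, y) ∈ Γ → Derives Γ x y
  /-- (a₃) `x⃗ ⊥ ∅` -/
  | triv (x : List Var) : Derives Γ x []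
  /-- (b₃) from `x⃗ ⊥ y⃗` infer `y⃗ ⊥ x⃗` -/
  | symm {x y : List Var} : Derives Γ x y → Derives Γ y x
  /-- (c₃) from `x⃗ ⊥ y⃗z⃗` infer `x⃗ ⊥ y⃗` -/
  | weak {x y z : List Var} : Derives Γ x (y ++ z) → Derives Γ x y
  /-- (d₃) from `x⃗ ⊥ y⃗` and `x⃗y⃗ ⊥ z⃗` infer `x⃗ ⊥ y⃗z⃗` -/
  | exch {x y z : List Var} : Derives Γ x y → Derives Γ (x ++ y) z → Derives Γ x (y ++ z)
  /-- (e₃) from `x ⊥ x` infer `x ⊥ y⃗` for arbitrary `y⃗` -/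
  | alg {v : Var} (y : List Var) : Derives Γ [v] [v] → Derives Γ [v] y
  /-- (f₃) from `x⃗ ⊥ y⃗` infer `πx⃗ ⊥ σy⃗` for permutations `π`, `σ` -/
  | perm {x x' y y' : List Var} :
      Derives Γ x y → x.Perm x' → y.Perm y' → Derives Γ x' y'
  /-- (g₃) from `x⃗vz⃗ ⊥ w⃗` infer `x⃗vvz⃗ ⊥ w⃗` -/
  | dup {x z w : List Var} (v : Var) :
      Derives Γ (x ++ v :: z) w → Derives Γ (x ++ v :: v :: z) w

/-- `AtomHolds P s x y`: the independence atom `x⃗ ⊥ y⃗` is satisfied under the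
assignment `s`, i.e. `s(x⃗) ⫝_∅ s(y⃗)`, where `s(x⃗)` is the set of values of the
variables occurring in `x⃗`. -/
def AtomHolds {M : Type*} (P : PreIndep M) (s : Var → M) (x y : List Var) : Prop :=
  P.ind (s '' {v : Var | v ∈ x}) ∅ (s '' {v : Var | v ∈ y})

/-- Semantic consequence in `AIRAIndL(⫝)`: every assignment satisfying all
atoms of `Γ` satisfies `x⃗ ⊥ y⃗`. -/
def Consequence {M : Type*} (P : PreIndep M) (Γ : Set IndAtom)
    (x y : List Var) : Prop :=
  ∀ s : Var → M, (∀ p ∈ Γ, AtomHolds P s p.1 p.2) → AtomHolds P s x y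

/-- (Soundness of AIRAIndL(⫝)) If `Γ ⊢ x⃗ ⊥ y⃗`, then every assignment
satisfying all atoms of `Γ` satisfies `x⃗ ⊥ y⃗`. -/
theorem airaindl_sound {M : Type*} (P : PreIndep M) (Γ : Set IndAtom)
    (x y : List Var) (h : Derives Γ x y) :
    Consequence P Γ x y := by
  intro s hs
  have himg : ∀ a b : List Var, s '' {v : Var | v ∈ a ++ b} =
      s '' {v : Var | v ∈ a} ∪ s '' {v : Var | v ∈ b} := by
    intro a b
    rw [← Set.image_union]
    ext v; simp
  induction h with
  | hyp hmem => exact hs _ hmem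
  | triv x =>
    unfold AtomHolds
    have : s '' {v : Var | v ∈ ([] : List Var)} = ∅ := by simp
    rw [this]
    exact P.symmetry _ _ _ (P.existence ∅ _)
  | symm h ih => exact P.symmetry _ _ _ ih
  | @weak a b c h ih =>
    unfold AtomHolds at *
    rw [himg] at ih
    exact P.symmetry _ _ _ (P.monotonicity _ _ _ _ (P.symmetry _ _ _ ih)
      Set.subset_union_left)
  | @exch a b c h1 h2 ih1 ih2 =>
    unfold AtomHolds at *
    rw [himg] at ih2
    rw [himg]
    set X := s '' {v : Var | v ∈ a}
    set Y := s '' {v : Var | v ∈ b}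
    set Z := s '' {v : Var | v ∈ c}
    have h3 : P.ind Z ∅ (X ∪ Y) := P.symmetry _ _ _ ih2
    have h4 : P.ind Z Y (X ∪ Y) :=
      P.baseMonotonicity Z (X ∪ Y) Y ∅ (Set.empty_subset _) Set.subset_union_right h3
    have h6 : P.ind X Y Z :=
      P.monotonicity (X ∪ Y) Z Y X (P.symmetry _ _ _ h4) Set.subset_union_left
    have h8 : P.ind (Z ∪ Y) Y X := P.normality Z X Y (P.symmetry _ _ _ h6)
    rw [Set.union_comm Z Y] at h8
    have h10 : P.ind (Y ∪ Z) ∅ X :=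
      P.transitivity X (Y ∪ Z) Y ∅ (Set.empty_subset _) Set.subset_union_left h8
        (P.symmetry _ _ _ ih1)
    exact P.symmetry _ _ _ h10
  | alg w h ih => exact P.antiReflexivity _ _ ih _
  | @perm a a' b b' h hp hq ih =>
    unfold AtomHolds at *
    have e1 : {v : Var | v ∈ a} = {v : Var | v ∈ a'} := by ext v; simp [hp.mem_iff]
    have e2 : {v : Var | v ∈ b} = {v : Var | v ∈ b'} := by ext v; simp [hq.mem_iff]
    rwa [e1, e2] at ih
  | @dup a c w v h ih =>
    unfold AtomHolds at *
    have e1 : {u : Var | u ∈ a ++ v :: v :: c} = {u : Var | u ∈ a ++ v :: c} := by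
      ext u; simp
    rwa [e1]
end

section
/- (Soundness of AIRACIndL(⫝)) Let ⫝ be a pre-independence relation on a set M and Σ a set of conditional independence atoms. If Σ ⊢ x⃗ ⊥_{z⃗} y⃗ in the deductive system of atomic conditional independence logic, then for every assignment s : Var → M such that s(v⃗) ⫝_{s(u⃗)} s(w⃗) for all atoms v⃗ ⊥_{u⃗} w⃗ ∈ Σ, we have s(x⃗) ⫝_{s(z⃗)} s(y⃗). -/
/-- A conditional independence atom `x⃗ ⊥_{z⃗} y⃗` is represented as the triple
`(x⃗, z⃗, y⃗)` of finite sequences of variables. -/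
abbrev CIndAtom := List Var × List Var × List Var

/-- The deductive system of atomic conditional independence logic:
`CDerives Γ x z y` means `Γ ⊢ x⃗ ⊥_{z⃗} y⃗`. -/
inductive CDerives (Γ : Set CIndAtom) : List Var → List Var → List Var → Prop
  /-- atoms of `Γ` may be used in deductions -/
  | hyp {x z y : List Var} : (x, z, y) ∈ Γ → CDerives Γ x z y
  /-- (a₅) `x⃗ ⊥_{x⃗} y⃗` -/
  | refl (x y : List Var) : CDerives Γ x x y
  /-- (b₅) from `x⃗ ⊥_{z⃗} y⃗` infer `y⃗ ⊥_{z⃗} x⃗` -/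
  | symm {x z y : List Var} : CDerives Γ x z y → CDerives Γ y z x
  /-- (c₅) from `x⃗x⃗' ⊥_{z⃗} y⃗y⃗'` infer `x⃗ ⊥_{z⃗} y⃗` -/
  | weak {x x' z y y' : List Var} :
      CDerives Γ (x ++ x') z (y ++ y') → CDerives Γ x z y
  /-- (d₅) from `x⃗ ⊥_{z⃗} y⃗` infer `x⃗z⃗ ⊥_{z⃗} y⃗z⃗` -/
  | norm {x z y : List Var} : CDerives Γ x z y → CDerives Γ (x ++ z) z (y ++ z)
  /-- (e₅) from `x⃗ ⊥_{z⃗} y⃗` and `u⃗ ⊥_{z⃗x⃗} y⃗` infer `u⃗ ⊥_{z⃗} y⃗` -/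
  | trans {x z y u : List Var} :
      CDerives Γ x z y → CDerives Γ u (z ++ x) y → CDerives Γ u z y
  /-- (f₅) from `y⃗ ⊥_{z⃗} y⃗` and `z⃗x⃗ ⊥_{y⃗} u⃗` infer `x⃗ ⊥_{z⃗} u⃗` -/
  | base {x z y u : List Var} :
      CDerives Γ y z y → CDerives Γ (z ++ x) y u → CDerives Γ x z u
  /-- (g₅) from `x⃗ ⊥_{z⃗} y⃗` and `x⃗y⃗ ⊥_{z⃗} u⃗` infer `x⃗ ⊥_{z⃗} y⃗u⃗` -/
  | exch {x z y u : List Var} :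
      CDerives Γ x z y → CDerives Γ (x ++ y) z u → CDerives Γ x z (y ++ u)
  /-- (h₅) from `x⃗ ⊥_{z⃗} y⃗` infer `πx⃗ ⊥_{τz⃗} σy⃗` for permutations `π`, `τ`, `σ` -/
  | perm {x x' z z' y y' : List Var} :
      CDerives Γ x z y → x.Perm x' → z.Perm z' → y.Perm y' → CDerives Γ x' z' y'

/-- `CAtomHolds P s x z y`: the conditional independence atom `x⃗ ⊥_{z⃗} y⃗` is
satisfied under the assignment `s`, i.e. `s(x⃗) ⫝_{s(z⃗)} s(y⃗)`. -/
def CAtomHolds {M : Type*} (P : PreIndep M) (s : Var → M)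
    (x z y : List Var) : Prop :=
  P.ind (s '' {v : Var | v ∈ x}) (s '' {v : Var | v ∈ z}) (s '' {v : Var | v ∈ y})


section Aux

variable {M : Type*} (P : PreIndep M)

lemma PreIndep.monoRight (A B B' C : Set M) (h : P.ind A C B) (hB : B' ⊆ B) :
    P.ind A C B' :=
  P.symmetry _ _ _ (P.monotonicity B A C B' (P.symmetry _ _ _ h) hB)

lemma PreIndep.trans5 (X Z Y U : Set M) (h1 : P.ind X Z Y) (h2 : P.ind U (Z ∪ X) Y) :
    P.ind U Z Y := by
  have n1 : P.ind (X ∪ Z) Z Y := P.normality _ _ _ h1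
  rw [Set.union_comm] at n1
  have n2 : P.ind (U ∪ (Z ∪ X)) (Z ∪ X) Y := P.normality _ _ _ h2
  have t := P.transitivity Y (U ∪ (Z ∪ X)) (Z ∪ X) Z
    Set.subset_union_left Set.subset_union_right n2 n1
  exact P.monotonicity _ _ _ _ t Set.subset_union_left

lemma PreIndep.base5 (X Z Y U : Set M) (hYY : P.ind Y Z Y) (hZX : P.ind (Z ∪ X) Y U) :
    P.ind X Z U := by
  have hU : P.ind Y Z U := P.antiReflexivity Y Z hYY U
  have s1 : P.ind ((Z ∪ X) ∪ Y) Y U := P.normality _ _ _ hZX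
  have s2 : P.ind U Y ((Z ∪ X) ∪ Y) := P.symmetry _ _ _ s1
  have s3 : P.ind U (Y ∪ Z) ((Z ∪ X) ∪ Y) :=
    P.baseMonotonicity U ((Z ∪ X) ∪ Y) (Y ∪ Z) Y Set.subset_union_left
      (Set.union_subset (Set.subset_union_right)
        (Set.subset_union_left.trans Set.subset_union_left)) s2
  have s4 : P.ind ((Z ∪ X) ∪ Y) (Y ∪ Z) U := P.symmetry _ _ _ s3
  have s5 : P.ind (Y ∪ Z) Z U := P.normality _ _ _ hU
  have t := P.transitivity U ((Z ∪ X) ∪ Y) (Y ∪ Z) Z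
    Set.subset_union_right
    (Set.union_subset Set.subset_union_right
      (Set.subset_union_left.trans Set.subset_union_left)) s4 s5
  exact P.monotonicity _ _ _ _ t (Set.subset_union_right.trans Set.subset_union_left)

lemma PreIndep.exch5 (X Z Y U : Set M) (h1 : P.ind X Z Y) (h2 : P.ind (X ∪ Y) Z U) :
    P.ind X Z (Y ∪ U) := by
  have s1 : P.ind ((X ∪ Y) ∪ Z) Z U := P.normality _ _ _ h2
  have s2 : P.ind U Z ((X ∪ Y) ∪ Z) := P.symmetry _ _ _ s1
  have s3 : P.ind U (Z ∪ Y) ((X ∪ Y) ∪ Z) :=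
    P.baseMonotonicity U ((X ∪ Y) ∪ Z) (Z ∪ Y) Z Set.subset_union_left
      (Set.union_subset Set.subset_union_right
        (Set.subset_union_right.trans Set.subset_union_left)) s2
  have s4 : P.ind U (Z ∪ Y) X :=
    P.monoRight _ _ _ _ s3 (Set.subset_union_left.trans Set.subset_union_left)
  have s5 : P.ind (U ∪ (Z ∪ Y)) (Z ∪ Y) X := P.normality _ _ _ s4
  have s6 : P.ind (Y ∪ Z) Z X := P.normality _ _ _ (P.symmetry _ _ _ h1)
  rw [Set.union_comm] at s6
  have t := P.transitivity X (U ∪ (Z ∪ Y)) (Z ∪ Y) Z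
    Set.subset_union_left Set.subset_union_right s5 s6
  have t2 : P.ind (Y ∪ U) Z X := P.monotonicity _ _ _ _ t
    (Set.union_subset (Set.subset_union_right.trans Set.subset_union_right)
      Set.subset_union_left)
  exact P.symmetry _ _ _ t2

lemma img_append (s : Var → M) (a b : List Var) :
    s '' {v : Var | v ∈ a ++ b} = s '' {v : Var | v ∈ a} ∪ s '' {v : Var | v ∈ b} := by
  rw [← Set.image_union]
  ext v
  simp [List.mem_append]

end Aux

/-- (Soundness of AIRACIndL(⫝)) If `Γ ⊢ x⃗ ⊥_{z⃗} y⃗`, then every assignment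
satisfying all atoms of `Γ` satisfies `x⃗ ⊥_{z⃗} y⃗`. -/
theorem airacindl_sound {M : Type*} (P : PreIndep M) (Γ : Set CIndAtom)
    (x z y : List Var) (h : CDerives Γ x z y) :
    ∀ s : Var → M, (∀ p ∈ Γ, CAtomHolds P s p.1 p.2.1 p.2.2) →
      CAtomHolds P s x z y := by
  induction h with
  | hyp hmem => intro s hs; exact hs _ hmem
  | refl x y => intro s hs; exact P.existence _ _
  | symm _ ih => intro s hs; exact P.symmetry _ _ _ (ih s hs)
  | weak _ ih =>
      intro s hs
      have := ih s hs
      unfold CAtomHolds at *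
      rw [img_append, img_append] at this
      exact P.monoRight _ _ _ _
        (P.monotonicity _ _ _ _ this Set.subset_union_left) Set.subset_union_left
  | norm _ ih =>
      intro s hs
      have := ih s hs
      unfold CAtomHolds at *
      rw [img_append, img_append]
      exact P.symmetry _ _ _ (P.normality _ _ _ (P.symmetry _ _ _ (P.normality _ _ _ this)))
  | trans _ _ ih1 ih2 =>
      intro s hs
      have h1 := ih1 s hs
      have h2 := ih2 s hs
      unfold CAtomHolds at *
      rw [img_append] at h2
      exact P.trans5 _ _ _ _ h1 h2
  | base _ _ ih1 ih2 =>
      intro s hs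
      have h1 := ih1 s hs
      have h2 := ih2 s hs
      unfold CAtomHolds at *
      rw [img_append] at h2
      exact P.base5 _ _ _ _ h1 h2
  | exch _ _ ih1 ih2 =>
      intro s hs
      have h1 := ih1 s hs
      have h2 := ih2 s hs
      unfold CAtomHolds at *
      rw [img_append] at h2
      rw [img_append]
      exact P.exch5 _ _ _ _ h1 h2
  | perm _ px pz py ih =>
      intro s hs
      have := ih s hs
      unfold CAtomHolds at *
      rwa [show {v : Var | v ∈ _} = _ from Set.ext fun v => px.mem_iff,
           show {v : Var | v ∈ _} = _ from Set.ext fun v => pz.mem_iff,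
           show {v : Var | v ∈ _} = _ from Set.ext fun v => py.mem_iff] at this
end
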